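/- Let k be an algebraically closed field and let A be a commutative k-subspace of the algebra M₂(k) of 2×2 matrices which is r-spanning for r = 1 or r = 2 (with respect to V = k²). Then dim_k A ≤ 2, and if dim_k A = 2 then there exists an invertible matrix P ∈ GL₂(k) such that P⁻¹·A·P is either the subspace of all diagonal 2×2 matrices, or the subspace {[[a, b], [0, a]] : a, b ∈ k} of upper triangular matrices with equal diagonal entries. -/
import Mathlib

open Matrix Polynomial

section Aux

variable {k : Type*} [Field k]

private lemma cayley2 (N : Matrix (Fin 2) (Fin 2) k) :
    N * N = (N 0 0 + N 1 1) • N - N.det • (1 : Matrix (Fin 2) (Fin 2) k) := by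
  ext i j
  fin_cases i <;> fin_cases j <;>
    simp [Matrix.mul_apply, Fin.sum_univ_two, Matrix.det_fin_two, Matrix.one_apply] <;> ring

private lemma centralizer2 {M N : Matrix (Fin 2) (Fin 2) k}
    (hM : ¬ (M 0 1 = 0 ∧ M 1 0 = 0 ∧ M 0 0 = M 1 1)) (h : M * N = N * M) :
    ∃ a b : k, N = a • (1 : Matrix (Fin 2) (Fin 2) k) + b • M := by
  have e00 := congrFun (congrFun h 0) 0
  have e01 := congrFun (congrFun h 0) 1
  have e10 := congrFun (congrFun h 1) 0
  have e11 := congrFun (congrFun h 1) 1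
  simp only [Matrix.mul_apply, Fin.sum_univ_two] at e00 e01 e10 e11
  by_cases hb : M 0 1 ≠ 0
  · refine ⟨N 0 0 - (N 0 1 / M 0 1) * M 0 0, N 0 1 / M 0 1, ?_⟩
    ext i j
    fin_cases i <;> fin_cases j
    all_goals simp [Matrix.one_apply]
    all_goals (try field_simp)
    all_goals first | ring1 | linear_combination e00 | linear_combination e01 | linear_combination e10 | linear_combination e11 | linear_combination -e00 | linear_combination -e01 | linear_combination -e10 | linear_combination -e11
  by_cases hc : M 1 0 ≠ 0
  · refine ⟨N 0 0 - (N 1 0 / M 1 0) * M 0 0, N 1 0 / M 1 0, ?_⟩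
    ext i j
    fin_cases i <;> fin_cases j
    all_goals simp [Matrix.one_apply]
    all_goals (try field_simp)
    all_goals first | ring1 | linear_combination e00 | linear_combination e01 | linear_combination e10 | linear_combination e11 | linear_combination -e00 | linear_combination -e01 | linear_combination -e10 | linear_combination -e11
  · push_neg at hb hc
    have hd : M 0 0 - M 1 1 ≠ 0 := fun hz => hM ⟨hb, hc, sub_eq_zero.mp hz⟩
    have hq : N 0 1 = 0 := by
      have : N 0 1 * (M 0 0 - M 1 1) = 0 := by
        rw [hb] at e01; linear_combination e01
      exact (mul_eq_zero.mp this).resolve_right hd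
    have hr : N 1 0 = 0 := by
      have : N 1 0 * (M 0 0 - M 1 1) = 0 := by
        rw [hc] at e10; linear_combination -e10
      exact (mul_eq_zero.mp this).resolve_right hd
    refine ⟨N 0 0 - ((N 0 0 - N 1 1) / (M 0 0 - M 1 1)) * M 0 0,
      (N 0 0 - N 1 1) / (M 0 0 - M 1 1), ?_⟩
    ext i j
    fin_cases i <;> fin_cases j
    all_goals simp [Matrix.one_apply, hb, hc, hq, hr]
    all_goals (try field_simp)
    all_goals (try ring1)

end Aux

/-- A set `A` of `2 × 2` matrices over `k` is `r`-spanning if there exists a subspace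
`U ⊆ k²` with `dim U ≤ r` such that `k²` is spanned by `{M ⬝ u : M ∈ A, u ∈ U}`. -/
def IsRSpanningMat (k : Type*) [Field k] (A : Set (Matrix (Fin 2) (Fin 2) k))
    (r : ℕ) : Prop :=
  ∃ U : Submodule k (Fin 2 → k), Module.finrank k U ≤ r ∧
    Submodule.span k {w : Fin 2 → k | ∃ M ∈ A, ∃ u ∈ U, w = M.mulVec u} = ⊤

theorem two_by_two_commutative_classification
    {k : Type*} [Field k] [IsAlgClosed k]
    (A : Submodule k (Matrix (Fin 2) (Fin 2) k))
    (hcomm : ∀ M ∈ A, ∀ N ∈ A, M * N = N * M)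
    (r : ℕ) (hr : r = 1 ∨ r = 2)
    (hspan : IsRSpanningMat k (A : Set (Matrix (Fin 2) (Fin 2) k)) r) :
    Module.finrank k A ≤ 2 ∧
    (Module.finrank k A = 2 →
      ∃ P : Matrix (Fin 2) (Fin 2) k, IsUnit P ∧
        ((fun M => P⁻¹ * M * P) '' (A : Set (Matrix (Fin 2) (Fin 2) k)) =
            {M : Matrix (Fin 2) (Fin 2) k | M 0 1 = 0 ∧ M 1 0 = 0} ∨
         (fun M => P⁻¹ * M * P) '' (A : Set (Matrix (Fin 2) (Fin 2) k)) =
            {M : Matrix (Fin 2) (Fin 2) k | M 1 0 = 0 ∧ M 0 0 = M 1 1})) := by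
  classical
  by_cases hsc : ∀ M ∈ A, M 0 1 = 0 ∧ M 1 0 = 0 ∧ M 0 0 = M 1 1
  · -- every element of A is scalar
    have hle : A ≤ Submodule.span k {(1 : Matrix (Fin 2) (Fin 2) k)} := by
      intro N hN
      obtain ⟨h1, h2, h3⟩ := hsc N hN
      have hNs : N = N 0 0 • (1 : Matrix (Fin 2) (Fin 2) k) := by
        ext i j
        fin_cases i <;> fin_cases j <;> simp [Matrix.one_apply, h1, h2]
        exact h3.symm
      rw [hNs]
      exact Submodule.smul_mem _ _ (Submodule.subset_span rfl)
    have h1 : Module.finrank k A ≤ 1 := by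
      refine (Submodule.finrank_mono hle).trans ?_
      simpa using finrank_span_le_card ({1} : Set (Matrix (Fin 2) (Fin 2) k))
    exact ⟨h1.trans one_le_two, fun h => by omega⟩
  · obtain ⟨M, hMA, hM⟩ : ∃ M, M ∈ A ∧ ¬(M 0 1 = 0 ∧ M 1 0 = 0 ∧ M 0 0 = M 1 1) := by
      by_contra h
      push_neg at h
      exact hsc fun M hMA => h M hMA
    have hAle : A ≤ Submodule.span k ({1, M} : Set (Matrix (Fin 2) (Fin 2) k)) := by
      intro N hN
      obtain ⟨a, b, rfl⟩ := centralizer2 hM (hcomm M hMA N hN)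
      exact Submodule.add_mem _
        (Submodule.smul_mem _ _ (Submodule.subset_span (Set.mem_insert _ _)))
        (Submodule.smul_mem _ _ (Submodule.subset_span (Set.mem_insert_of_mem _ rfl)))
    have hspan2 :
        Module.finrank k (Submodule.span k ({1, M} : Set (Matrix (Fin 2) (Fin 2) k))) ≤ 2 := by
      refine (finrank_span_le_card _).trans ?_
      rw [Set.toFinset_insert, Set.toFinset_singleton]
      exact (Finset.card_insert_le _ _).trans (by simp)
    have hA2 : Module.finrank k A ≤ 2 := (Submodule.finrank_mono hAle).trans hspan2
    refine ⟨hA2, fun h2 => ?_⟩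
    have hAeq : A = Submodule.span k ({1, M} : Set (Matrix (Fin 2) (Fin 2) k)) :=
      Submodule.eq_of_le_of_finrank_le hAle (by omega)
    -- eigenvalue
    obtain ⟨l, hl⟩ : ∃ l : k, l ^ 2 - (M 0 0 + M 1 1) * l + M.det = 0 := by
      obtain ⟨l, hl⟩ := IsAlgClosed.exists_root
        (X ^ 2 - C (M 0 0 + M 1 1) * X + C M.det) (by
          have hdeg : (X ^ 2 - C (M 0 0 + M 1 1) * X + C M.det : k[X]).degree = 2 := by
            compute_degree!
          rw [hdeg]; norm_num)
      refine ⟨l, ?_⟩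
      have h' := hl
      simp [Polynomial.IsRoot] at h'
      linear_combination h'
    set τ : k := M 0 0 + M 1 1 - 2 * l with hτdef
    set N : Matrix (Fin 2) (Fin 2) k := M - l • 1 with hNdef
    have hNe : ∀ i j, N i j = M i j - l * (1 : Matrix (Fin 2) (Fin 2) k) i j := by
      intro i j; simp [hNdef]
    have hdetN : N.det = 0 := by
      rw [Matrix.det_fin_two, hNe, hNe, hNe, hNe]
      rw [Matrix.det_fin_two] at hl
      simp [Matrix.one_apply]
      linear_combination hl
    have hNsq : N * N = τ • N := by
      have htr : N 0 0 + N 1 1 = τ := by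
        rw [hNe, hNe]; simp [Matrix.one_apply]; ring
      rw [cayley2 N, hdetN, htr]
      simp
    have hNne : N ≠ 0 := by
      intro h0
      apply hM
      have hM' : M = l • (1 : Matrix (Fin 2) (Fin 2) k) := by
        rw [hNdef] at h0; rwa [sub_eq_zero] at h0
      refine ⟨?_, ?_, ?_⟩ <;> simp [hM', Matrix.one_apply]
    obtain ⟨w, hw⟩ : ∃ w, N.mulVec w ≠ 0 := by
      by_contra h
      push_neg at h
      apply hNne
      ext i j
      have h' := congrFun (h (Pi.single j 1)) i
      simpa [Matrix.mulVec_single] using h'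
    set u : Fin 2 → k := N.mulVec w with hu
    have hNu : N.mulVec u = τ • u := by
      rw [hu, Matrix.mulVec_mulVec, hNsq, Matrix.smul_mulVec]
    have hMvec : ∀ x : Fin 2 → k, M.mulVec x = N.mulVec x + l • x := by
      intro x
      rw [hNdef, Matrix.sub_mulVec, Matrix.smul_mulVec, Matrix.one_mulVec]
      abel
    -- common machinery for both cases
    have key : ∀ (P T : Matrix (Fin 2) (Fin 2) k), IsUnit P → M * P = P * T →
        (fun X => P⁻¹ * X * P) '' (A : Set (Matrix (Fin 2) (Fin 2) k)) =
          {Y : Matrix (Fin 2) (Fin 2) k | ∃ a b : k, Y = a • 1 + b • T} := by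
      intro P T hPu hMP
      have hPP : P⁻¹ * P = 1 := Matrix.nonsing_inv_mul P ((Matrix.isUnit_iff_isUnit_det P).mp hPu)
      have hT : P⁻¹ * M * P = T := by
        calc P⁻¹ * M * P = P⁻¹ * (M * P) := by rw [mul_assoc]
          _ = P⁻¹ * P * T := by rw [hMP, ← mul_assoc]
          _ = T := by rw [hPP, one_mul]
      have hkey : ∀ a b : k, P⁻¹ * (a • 1 + b • M) * P = a • 1 + b • T := by
        intro a b
        have expand : P⁻¹ * (a • 1 + b • M) * P = a • (P⁻¹ * 1 * P) + b • (P⁻¹ * M * P) := by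
          simp [Matrix.mul_add, Matrix.add_mul, Matrix.mul_smul, Matrix.smul_mul]
        rw [expand, hT, mul_one, hPP]
      ext Y
      constructor
      · rintro ⟨X, hX, rfl⟩
        rw [hAeq] at hX
        obtain ⟨a, b, hab⟩ := Submodule.mem_span_pair.mp hX
        exact ⟨a, b, by rw [← hab]; exact hkey a b⟩
      · rintro ⟨a, b, rfl⟩
        refine ⟨a • 1 + b • M, ?_, hkey a b⟩
        rw [hAeq]
        exact Submodule.mem_span_pair.mpr ⟨a, b, rfl⟩
    by_cases hτ : τ = 0
    · -- Jordan block case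
      have hNu0 : N.mulVec u = 0 := by rw [hNu, hτ, zero_smul]
      have hu0 : u ≠ 0 := hw
      have hli : LinearIndependent k ![u, w] := by
        rw [linearIndependent_fin2]
        simp only [Matrix.cons_val_one, Matrix.head_cons, Matrix.cons_val_zero]
        constructor
        · intro h0
          apply hu0
          rw [hu, h0, Matrix.mulVec_zero]
        · intro a ha
          have h1 : a • u = 0 := by
            have h2 := congrArg (fun x => N.mulVec x) ha
            simpa [Matrix.mulVec_smul, ← hu, hNu0] using h2
          rcases smul_eq_zero.mp h1 with h' | h'
          · exact hu0 (by rw [← ha, h', zero_smul])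
          · exact hu0 h'
      set P : Matrix (Fin 2) (Fin 2) k := (Matrix.of ![u, w])ᵀ with hPdef
      have hPu : IsUnit P := by
        apply Matrix.linearIndependent_cols_iff_isUnit.mp
        exact hli
      have hMu : M.mulVec u = l • u := by rw [hMvec, hNu0, zero_add]
      have hMw : M.mulVec w = u + l • w := by rw [hMvec, ← hu]
      set T : Matrix (Fin 2) (Fin 2) k := !![l, 1; 0, l] with hTdef
      have hMP : M * P = P * T := by
        ext i j
        have c0 := congrFun hMu i
        have c1 := congrFun hMw i
        simp only [Matrix.mulVec, dotProduct, Fin.sum_univ_two, Pi.smul_apply,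
          Pi.add_apply, smul_eq_mul] at c0 c1
        fin_cases j
        all_goals simp [hPdef, hTdef, Matrix.mul_apply, Fin.sum_univ_two,
          Matrix.transpose_apply, Matrix.vecHead, Matrix.vecTail, Matrix.cons_val_zero,
          Matrix.cons_val_one, Matrix.head_cons, Matrix.of_apply]
        all_goals first | linear_combination c0 | linear_combination c1
      refine ⟨P, hPu, Or.inr ?_⟩
      rw [key P T hPu hMP]
      ext Y
      simp only [Set.mem_setOf_eq]
      constructor
      · rintro ⟨a, b, rfl⟩
        constructor <;> simp [hTdef, Matrix.add_apply, Matrix.smul_apply, Matrix.one_apply]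
      · rintro ⟨h1', h2'⟩
        refine ⟨Y 0 0 - Y 0 1 * l, Y 0 1, ?_⟩
        ext i j
        fin_cases i <;> fin_cases j
        all_goals simp [hTdef, Matrix.add_apply, Matrix.smul_apply, Matrix.one_apply]
        all_goals first | ring1 | exact h1' | linear_combination h2' | linear_combination -h2'
    · -- diagonalizable case
      have hu0 : u ≠ 0 := hw
      obtain ⟨v, hv0, hvK⟩ := Matrix.exists_mulVec_eq_zero_iff.mpr hdetN
      have hli : LinearIndependent k ![v, u] := by
        rw [linearIndependent_fin2]
        simp only [Matrix.cons_val_one, Matrix.head_cons, Matrix.cons_val_zero]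
        refine ⟨hu0, fun a ha => ?_⟩
        have h1 := congrArg (fun x => N.mulVec x) ha
        simp only [Matrix.mulVec_smul, hNu, hvK] at h1
        rcases smul_eq_zero.mp h1 with h' | h'
        · exact hv0 (by rw [← ha, h', zero_smul])
        · rcases smul_eq_zero.mp h' with h'' | h''
          · exact hτ h''
          · exact hu0 h''
      set P : Matrix (Fin 2) (Fin 2) k := (Matrix.of ![v, u])ᵀ with hPdef
      have hPu : IsUnit P := by
        apply Matrix.linearIndependent_cols_iff_isUnit.mp
        exact hli
      have hMv : M.mulVec v = l • v := by rw [hMvec, hvK, zero_add]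
      have hMu : M.mulVec u = (l + τ) • u := by
        rw [hMvec, hNu]
        ext i
        simp
        ring
      set T : Matrix (Fin 2) (Fin 2) k := !![l, 0; 0, l + τ] with hTdef
      have hMP : M * P = P * T := by
        ext i j
        have c0 := congrFun hMv i
        have c1 := congrFun hMu i
        simp only [Matrix.mulVec, dotProduct, Fin.sum_univ_two, Pi.smul_apply,
          Pi.add_apply, smul_eq_mul] at c0 c1
        fin_cases j
        all_goals simp [hPdef, hTdef, Matrix.mul_apply, Fin.sum_univ_two,
          Matrix.transpose_apply, Matrix.vecHead, Matrix.vecTail, Matrix.cons_val_zero,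
          Matrix.cons_val_one, Matrix.head_cons, Matrix.of_apply]
        all_goals first | linear_combination c0 | linear_combination c1
      refine ⟨P, hPu, Or.inl ?_⟩
      rw [key P T hPu hMP]
      ext Y
      simp only [Set.mem_setOf_eq]
      constructor
      · rintro ⟨a, b, rfl⟩
        constructor <;> simp [hTdef, Matrix.add_apply, Matrix.smul_apply, Matrix.one_apply]
      · rintro ⟨h1', h2'⟩
        refine ⟨(Y 0 0 * (l + τ) - Y 1 1 * l) / τ, (Y 1 1 - Y 0 0) / τ, ?_⟩
        ext i j
        fin_cases i <;> fin_cases j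
        all_goals simp [hTdef, Matrix.add_apply, Matrix.smul_apply, Matrix.one_apply, h1', h2']
        all_goals (try field_simp)
        all_goals (try ring1)
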